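/- Let X ⊆ {0,1}^n be the solution set of a system of polynomial constraints, let J be a tree decomposition of the dependency hypergraph of this system, and for each bag U let D_U be a probability distribution supported on the set X_U of locally feasible vectors on U (restrictions to U of elements of X). If for every edge (U,V) of J the distributions D_U and D_V agree on their marginals over U∩V, then there exists a distribution D supported on X whose marginal on every bag U equals D_U. -/

import Mathlib

namespace Stmt2Aux

open SimpleGraph

variable {ι : Type}

def inducedHom (T : SimpleGraph ι) (s : Set ι) : T.induce s →g T :=
  ⟨Subtype.val, fun h => h⟩

lemma walk_of_induce {T : SimpleGraph ι} {s : Set ι} {i j : s}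
    (W : (T.induce s).Walk i j) :
    ∃ W' : T.Walk i.1 j.1, ∀ k ∈ W'.support, k ∈ s := by
  refine ⟨W.map (inducedHom T s), ?_⟩
  intro k hk
  have hk' : k ∈ (W.map (inducedHom T s)).support := hk
  rw [SimpleGraph.Walk.support_map, List.mem_map] at hk'
  obtain ⟨a, _, rfl⟩ := hk'
  exact a.2

lemma walk_to_induce {T : SimpleGraph ι} (s : Set ι) {i j : ι} (W : T.Walk i j)
    (hW : ∀ k ∈ W.support, k ∈ s) (hi : i ∈ s) (hj : j ∈ s) :
    ∃ W' : (T.induce s).Walk ⟨i, hi⟩ ⟨j, hj⟩, ∀ k ∈ W'.support, k.1 ∈ W.support := by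
  induction W with
  | nil =>
    refine ⟨SimpleGraph.Walk.nil, ?_⟩
    intro k hk
    simp only [SimpleGraph.Walk.support_nil, List.mem_singleton] at hk ⊢
    rw [hk]
  | @cons a b c h W ih =>
    have hb : b ∈ s := hW b (by simp [SimpleGraph.Walk.support_cons])
    obtain ⟨W₂, hW₂⟩ := ih (fun k hk => hW k (by simp [SimpleGraph.Walk.support_cons, hk])) hb hj
    refine ⟨SimpleGraph.Walk.cons (by exact h : (T.induce s).Adj ⟨a, hi⟩ ⟨b, hb⟩) W₂, ?_⟩
    intro k hk
    change k ∈ (⟨a, hi⟩ : s) :: W₂.support at hk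
    rw [List.mem_cons] at hk
    rcases hk with hk | hk
    · simp [hk, SimpleGraph.Walk.support_cons]
    · have := hW₂ k hk
      simp [SimpleGraph.Walk.support_cons, this]

lemma isAcyclic_induce {T : SimpleGraph ι} (h : T.IsAcyclic) (s : Set ι) :
    (T.induce s).IsAcyclic := by
  intro v c hc
  exact h (c.map (inducedHom T s)) (hc.map Subtype.val_injective)

lemma avoid_leaf {T : SimpleGraph ι} {ℓ p : ι}
    (hp : ∀ q, T.Adj ℓ q → q = p) :
    ∀ (N : ℕ) {i j : ι} (W : T.Walk i j), W.length ≤ N → i ≠ ℓ → j ≠ ℓ →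
      ∃ W' : T.Walk i j, (∀ k ∈ W'.support, k ∈ W.support) ∧ ℓ ∉ W'.support := by
  intro N
  induction N with
  | zero =>
    intro i j W hlen hi _
    cases W with
    | nil =>
      exact ⟨SimpleGraph.Walk.nil, fun k hk => hk, by
        simp only [SimpleGraph.Walk.support_nil, List.mem_singleton]
        exact fun h => hi h.symm⟩
    | cons h W => simp at hlen
  | succ N ih =>
    intro i j W hlen hi hj
    cases W with
    | nil =>
      exact ⟨SimpleGraph.Walk.nil, fun k hk => hk, by
        simp only [SimpleGraph.Walk.support_nil, List.mem_singleton]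
        exact fun h => hi h.symm⟩
    | @cons _ b _ h W₁ =>
      by_cases hb : b = ℓ
      · subst hb
        have hip : i = p := hp i h.symm
        cases W₁ with
        | nil => exact absurd rfl hj
        | @cons _ c _ h2 W₂ =>
          have hcp : c = p := hp c h2
          subst hip; subst hcp
          have hlen2 : W₂.length ≤ N := by
            simp only [SimpleGraph.Walk.length_cons] at hlen ⊢
            omega
          obtain ⟨W', hsub, hℓ⟩ := ih W₂ hlen2 hi hj
          refine ⟨W', fun k hk => ?_, hℓ⟩
          have := hsub k hk
          simp only [SimpleGraph.Walk.support_cons, List.mem_cons]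
          tauto
      · obtain ⟨W', hsub, hℓ⟩ := ih W₁ (by
          simp only [SimpleGraph.Walk.length_cons] at hlen; omega) hb hj
        refine ⟨SimpleGraph.Walk.cons h W', fun k hk => ?_, ?_⟩
        · rw [SimpleGraph.Walk.support_cons, List.mem_cons] at hk ⊢
          rcases hk with hk | hk
          · exact Or.inl hk
          · exact Or.inr (hsub k hk)
        · rw [SimpleGraph.Walk.support_cons, List.mem_cons]
          rintro (h' | h')
          · exact hi h'.symm
          · exact hℓ h'

lemma exists_leaf [Fintype ι] {T : SimpleGraph ι} (ht : T.IsTree)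
    (h2 : 2 ≤ Fintype.card ι) :
    ∃ ℓ p, T.Adj ℓ p ∧ ∀ q, T.Adj ℓ q → q = p := by
  classical
  by_contra hcon
  push_neg at hcon
  have hdeg : ∀ v : ι, 2 ≤ T.degree v := by
    intro v
    -- v has a neighbor
    obtain ⟨w, hw⟩ : ∃ w, w ≠ v := Fintype.exists_ne_of_one_lt_card h2 v
    obtain ⟨W⟩ := ht.isConnected.preconnected v w
    have hadj : ∃ u, T.Adj v u := by
      cases W with
      | nil => exact absurd rfl hw
      | cons h _ => exact ⟨_, h⟩
    obtain ⟨u, hu⟩ := hadj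
    obtain ⟨q, hq, hqu⟩ := hcon v u hu
    have : ({u, q} : Finset ι) ⊆ T.neighborFinset v := by
      intro x hx
      rw [Finset.mem_insert, Finset.mem_singleton] at hx
      rcases hx with rfl | rfl
      · exact (T.mem_neighborFinset v x).mpr hu
      · exact (T.mem_neighborFinset v x).mpr hq
    have hc : ({u, q} : Finset ι).card = 2 := by
      rw [Finset.card_insert_of_notMem (by simp [Ne.symm hqu]), Finset.card_singleton]
    calc 2 = ({u, q} : Finset ι).card := hc.symm
      _ ≤ (T.neighborFinset v).card := Finset.card_le_card this
      _ = T.degree v := rfl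
  have hsum : 2 * Fintype.card ι ≤ ∑ v, T.degree v := by
    calc 2 * Fintype.card ι = ∑ _v : ι, 2 := by simp [mul_comm]
      _ ≤ ∑ v, T.degree v := Finset.sum_le_sum fun v _ => hdeg v
  rw [T.sum_degrees_eq_twice_card_edges] at hsum
  have hedge := ht.card_edgeFinset
  omega


open scoped ENNReal

lemma bind_congr' {α β : Type} (p : PMF α) (f g : α → PMF β)
    (h : ∀ a ∈ p.support, f a = g a) : p.bind f = p.bind g := by
  ext b
  simp only [PMF.bind_apply]
  refine tsum_congr fun a => ?_
  by_cases ha : p a = 0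
  · simp [ha]
  · rw [h a ha]

lemma map_congr' {α β : Type} (p : PMF α) (f g : α → β)
    (h : ∀ a ∈ p.support, f a = g a) : p.map f = p.map g :=
  bind_congr' p _ _ fun a ha => by simp only [Function.comp, h a ha]

lemma map_bind' {α β γ : Type} (p : PMF α) (f : α → PMF β) (g : β → γ) :
    (p.bind f).map g = p.bind fun a => (f a).map g := by
  simp only [PMF.map, PMF.bind_bind]

lemma disint {α β : Type} (μ : PMF α) (r : α → β) (F : β → PMF α)
    (hF : ∀ g, (μ.map r) g ≠ 0 →
      ∃ h : ∃ a ∈ {a | r a = g}, a ∈ μ.support, F g = μ.filter {a | r a = g} h) :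
    (μ.map r).bind F = μ := by
  classical
  ext a
  rw [PMF.bind_apply]
  have hmap : ∀ g, (μ.map r) g = ∑' a', Set.indicator {a' | r a' = g} μ a' := by
    intro g
    rw [PMF.map_apply]
    refine tsum_congr fun a' => ?_
    rw [Set.indicator_apply]
    by_cases h : r a' = g
    · subst h; simp
    · rw [if_neg (fun hh => h hh.symm), if_neg (by exact h)]
  have hzero : ∀ g, g ≠ r a → (μ.map r) g * F g a = 0 := by
    intro g hg
    by_cases h0 : (μ.map r) g = 0
    · rw [h0, zero_mul]
    · obtain ⟨hh, hFg⟩ := hF g h0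
      rw [hFg, PMF.filter_apply_eq_zero_of_notMem hh
        (by simp only [Set.mem_setOf_eq]; exact fun hmem => hg hmem.symm), mul_zero]
  rw [tsum_eq_single (r a) hzero]
  by_cases h0 : (μ.map r) (r a) = 0
  · have hle : μ a ≤ (μ.map r) (r a) := by
      rw [PMF.map_apply]
      have := ENNReal.le_tsum (f := fun a' => if r a = r a' then μ a' else 0) a
      simpa using this
    rw [h0] at hle
    rw [h0, zero_mul]
    exact (le_antisymm hle zero_le).symm
  · obtain ⟨hh, hFg⟩ := hF (r a) h0
    rw [hFg, PMF.filter_apply,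
      Set.indicator_of_mem (by exact rfl : a ∈ {a' | r a' = r a}), ← hmap,
      mul_comm (μ a), ← mul_assoc, ENNReal.mul_inv_cancel h0 (PMF.apply_ne_top _ _), one_mul]

lemma map_ne_zero_exists {α β : Type} {μ : PMF α} {r : α → β} {g : β}
    (hg : (μ.map r) g ≠ 0) : ∃ f, r f = g ∧ μ f ≠ 0 := by
  by_contra hcon
  push_neg at hcon
  apply hg
  rw [PMF.map_apply, ENNReal.tsum_eq_zero]
  intro f
  by_cases h : g = r f
  · rw [if_pos h]; exact hcon f h.symm
  · rw [if_neg h]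

open Classical in
/-- Conditional distribution of `μ` given that `rL` takes the value `g`
(junk value `μ` if the conditioning event is null). -/
noncomputable def condPMF {B C : Type} (μ : PMF B) (rL : B → C) (g : C) : PMF B :=
  if h : ∃ f ∈ {f | rL f = g}, f ∈ μ.support then μ.filter {f | rL f = g} h else μ

lemma condPMF_eq {B C : Type} {μ : PMF B} {rL : B → C} {g : C}
    (hg : (μ.map rL) g ≠ 0) :
    ∃ h : ∃ f ∈ {f | rL f = g}, f ∈ μ.support,
      condPMF μ rL g = μ.filter {f | rL f = g} h := by
  obtain ⟨f, hf1, hf2⟩ := map_ne_zero_exists hg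
  have hex : ∃ f ∈ {f | rL f = g}, f ∈ μ.support := ⟨f, hf1, hf2⟩
  exact ⟨hex, by rw [condPMF, dif_pos hex]⟩

lemma condPMF_support {B C : Type} {μ : PMF B} {rL : B → C} {g : C}
    (hg : (μ.map rL) g ≠ 0) :
    ∀ f ∈ (condPMF μ rL g).support, rL f = g := by
  obtain ⟨hex, heq⟩ := condPMF_eq hg
  rw [heq, PMF.support_filter]
  exact fun f hf => hf.1

lemma marg_ne_zero {A B C : Type} {Dg : PMF A} {rI : A → C} {x : A}
    (hx : x ∈ Dg.support) {μ : PMF B} {rL : B → C} (hmarg : Dg.map rI = μ.map rL) :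
    (μ.map rL) (rI x) ≠ 0 := by
  have : rI x ∈ (Dg.map rI).support := by
    rw [PMF.support_map]; exact Set.mem_image_of_mem _ hx
  rw [hmarg] at this
  exact this

lemma stepA {A B C E : Type} (Dg : PMF A) (μ : PMF B) (rI : A → C) (rL : B → C)
    (hmarg : Dg.map rI = μ.map rL) (ov : A → B → A) (r : A → E)
    (hr : ∀ x f, rL f = rI x → r (ov x f) = r x) :
    (Dg.bind fun x => (condPMF μ rL (rI x)).map (ov x)).map r = Dg.map r := by
  rw [map_bind']
  simp only [PMF.map_comp]
  have : ∀ x ∈ Dg.support,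
      (condPMF μ rL (rI x)).map (r ∘ ov x) = PMF.pure (r x) := by
    intro x hx
    have hgx := marg_ne_zero hx hmarg
    calc (condPMF μ rL (rI x)).map (r ∘ ov x)
        = (condPMF μ rL (rI x)).map (Function.const B (r x)) :=
          map_congr' _ _ _ (fun f hf => by
            simp only [Function.comp_apply, Function.const_apply]
            exact hr x f (condPMF_support hgx f hf))
      _ = PMF.pure (r x) := PMF.map_const _ _
  rw [bind_congr' _ _ _ this]
  rfl

lemma stepB {A B C : Type} (Dg : PMF A) (μ : PMF B) (rI : A → C) (rL : B → C)
    (hmarg : Dg.map rI = μ.map rL) (ov : A → B → A) (rB : A → B)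
    (hr : ∀ x f, rL f = rI x → rB (ov x f) = f) :
    (Dg.bind fun x => (condPMF μ rL (rI x)).map (ov x)).map rB = μ := by
  rw [map_bind']
  simp only [PMF.map_comp]
  have : ∀ x ∈ Dg.support,
      (condPMF μ rL (rI x)).map (rB ∘ ov x) = condPMF μ rL (rI x) := by
    intro x hx
    have hgx := marg_ne_zero hx hmarg
    calc (condPMF μ rL (rI x)).map (rB ∘ ov x)
        = (condPMF μ rL (rI x)).map id :=
          map_congr' _ _ _ (fun f hf => by
            simp only [Function.comp_apply, id_eq]
            exact hr x f (condPMF_support hgx f hf))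
      _ = condPMF μ rL (rI x) := PMF.map_id _
  rw [bind_congr' _ _ _ this]
  have hbm : (Dg.bind fun x => condPMF μ rL (rI x)) = (Dg.map rI).bind (condPMF μ rL) :=
    (PMF.bind_map Dg rI (condPMF μ rL)).symm
  rw [hbm, hmarg]
  exact disint μ rL _ (fun g hg => condPMF_eq hg)


open SimpleGraph in
lemma glue {n : ℕ} : ∀ (N : ℕ) {ι : Type} [Fintype ι] (T : SimpleGraph ι)
    (bag : ι → Finset (Fin n)) (_htree : T.IsTree)
    (_hconn : ∀ (v : Fin n) (i j : ι), v ∈ bag i → v ∈ bag j →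
      ∃ W : T.Walk i j, ∀ k ∈ W.support, v ∈ bag k)
    (D : (i : ι) → PMF ({v : Fin n // v ∈ bag i} → Bool))
    (_hagree : ∀ i j, T.Adj i j →
      (D i).map (fun f (v : {v : Fin n // v ∈ bag i ∩ bag j}) =>
          f ⟨v.1, (Finset.mem_inter.mp v.2).1⟩) =
      (D j).map (fun f (v : {v : Fin n // v ∈ bag i ∩ bag j}) =>
          f ⟨v.1, (Finset.mem_inter.mp v.2).2⟩)),
    Fintype.card ι ≤ N →
    ∃ D' : PMF (Fin n → Bool),
      ∀ i : ι, D'.map (fun x (v : {v : Fin n // v ∈ bag i}) => x v.1) = D i := by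
  intro N
  induction N with
  | zero =>
    intro ι _ T bag htree _ _ _ hcard
    have := htree.isConnected.nonempty
    have := Fintype.card_pos (α := ι)
    omega
  | succ N ih =>
    intro ι _ T bag htree hconn D hagree hcard
    have hne := htree.isConnected.nonempty
    by_cases h1 : Fintype.card ι = 1
    · -- base case: a single bag
      obtain ⟨i₀, hi₀⟩ := Fintype.card_eq_one_iff.mp h1
      refine ⟨(D i₀).map (fun f v => if h : v ∈ bag i₀ then f ⟨v, h⟩ else false), ?_⟩
      intro i
      have hii : i = i₀ := hi₀ i
      subst hii
      rw [PMF.map_comp]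
      have hcomp : ((fun x (v : {v : Fin n // v ∈ bag i}) => x v.1) ∘
          (fun f (v : Fin n) => if h : v ∈ bag i then f ⟨v, h⟩ else false)) = id := by
        funext f
        funext v
        simp only [Function.comp_apply, id_eq]
        rw [dif_pos v.2]
      rw [hcomp, PMF.map_id]
    · have h2 : 2 ≤ Fintype.card ι := by
        have := Fintype.card_pos (α := ι); omega
      classical
      obtain ⟨ℓ, p, hadj, hp⟩ := exists_leaf htree h2
      have hℓp : ℓ ≠ p := hadj.ne
      -- the subtree obtained by removing the leaf ℓ
      set s : Set ι := {i | i ≠ ℓ} with hs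
      have hps : p ∈ s := hℓp.symm
      have hcards : Fintype.card ↥s ≤ N := by
        have hlt : Fintype.card ↥s < Fintype.card ι :=
          Fintype.card_subtype_lt (x := ℓ) (by simp [hs])
        omega
      haveI : Nonempty ↥s := ⟨⟨p, hps⟩⟩
      have htree' : (T.induce s).IsTree := by
        constructor
        · constructor
          · rintro ⟨i, hi⟩ ⟨j, hj⟩
            obtain ⟨W⟩ := htree.isConnected.preconnected i j
            obtain ⟨W', _, hℓW⟩ := avoid_leaf hp W.length W le_rfl hi hj
            obtain ⟨W'', _⟩ := walk_to_induce s W'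
              (fun k hk => fun hkℓ => hℓW (hkℓ ▸ hk)) hi hj
            exact ⟨W''⟩
        · exact isAcyclic_induce htree.IsAcyclic s
      have hconn' : ∀ (v : Fin n) (i j : ↥s), v ∈ bag i.1 → v ∈ bag j.1 →
          ∃ W : (T.induce s).Walk i j, ∀ k ∈ W.support, v ∈ bag k.1 := by
        rintro v ⟨i, hi⟩ ⟨j, hj⟩ hvi hvj
        obtain ⟨W, hW⟩ := hconn v i j hvi hvj
        obtain ⟨W', hsub, hℓW⟩ := avoid_leaf hp W.length W le_rfl hi hj
        obtain ⟨W'', hW''⟩ := walk_to_induce s W'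
          (fun k hk => fun hkℓ => hℓW (hkℓ ▸ hk)) hi hj
        exact ⟨W'', fun k hk => hW k.1 (hsub k.1 (hW'' k hk))⟩
      obtain ⟨Dg, hDg⟩ := ih (T.induce s) (fun i => bag i.1) htree'
        hconn' (fun i => D i.1)
        (fun i j hij => hagree i.1 j.1 hij) hcards
      -- key structural fact: a variable in the leaf bag shared with any other bag
      -- must lie in the neighbor bag
      have hkey : ∀ (v : Fin n) (i : ι), i ≠ ℓ → v ∈ bag ℓ → v ∈ bag i → v ∈ bag p := by
        intro v i hi hvl hvi
        obtain ⟨W, hW⟩ := hconn v ℓ i hvl hvi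
        cases W with
        | nil => exact absurd rfl hi
        | @cons _ b _ h W₁ =>
          have hb : b = p := hp b h
          refine hb ▸ hW b (by
            rw [SimpleGraph.Walk.support_cons]
            exact List.mem_cons_of_mem _ W₁.start_mem_support)
      -- gluing data
      have hmargI : Dg.map (fun (x : Fin n → Bool)
            (v : {v : Fin n // v ∈ bag p ∩ bag ℓ}) => x v.1) =
          (D ℓ).map (fun f (v : {v : Fin n // v ∈ bag p ∩ bag ℓ}) =>
            f ⟨v.1, (Finset.mem_inter.mp v.2).2⟩) := by
        have h1 : Dg.map (fun x (v : {v : Fin n // v ∈ bag p}) => x v.1) = D p :=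
          hDg ⟨p, hps⟩
        have h2 := hagree p ℓ hadj.symm
        rw [← h1, PMF.map_comp] at h2
        exact h2
      set rI : (Fin n → Bool) → ({v : Fin n // v ∈ bag p ∩ bag ℓ} → Bool) :=
        fun x v => x v.1 with hrI
      set rL : ({v : Fin n // v ∈ bag ℓ} → Bool) →
          ({v : Fin n // v ∈ bag p ∩ bag ℓ} → Bool) :=
        fun f v => f ⟨v.1, (Finset.mem_inter.mp v.2).2⟩ with hrL
      set ov : (Fin n → Bool) → ({v : Fin n // v ∈ bag ℓ} → Bool) → (Fin n → Bool) :=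
        fun x f v => if h : v ∈ bag ℓ then f ⟨v, h⟩ else x v with hov
      refine ⟨Dg.bind fun x => (condPMF (D ℓ) rL (rI x)).map (ov x), ?_⟩
      intro i
      by_cases hiℓ : i = ℓ
      · subst hiℓ
        refine stepB Dg (D i) rI rL hmargI ov _ ?_
        intro x f _
        funext v
        simp only [hov]
        rw [dif_pos v.2]
      · have hstep := stepA Dg (D ℓ) rI rL hmargI ov
          (fun x (v : {v : Fin n // v ∈ bag i}) => x v.1) ?_
        · rw [hstep]
          exact hDg ⟨i, hiℓ⟩
        · intro x f hf
          funext v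
          simp only [hov]
          by_cases hv : v.1 ∈ bag ℓ
          · rw [dif_pos hv]
            have hvp : v.1 ∈ bag p := hkey v.1 i hiℓ hv v.2
            have := congrFun hf ⟨v.1, Finset.mem_inter.mpr ⟨hvp, hv⟩⟩
            exact this
          · rw [dif_neg hv]

end Stmt2Aux

/-- Let `X ⊆ {0,1}^n` be the solution set of a system of constraints
(constraint `j` has scope `scope j`, and depends only on the variables in its scope).
Let `T` with bags `bag` be a tree decomposition of the dependency hypergraph (every
scope is contained in some bag, and every variable lies in a nonempty connected set of
bags). For each bag `i` let `D i` be a distribution supported on the locally feasible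
vectors on `bag i` (restrictions to `bag i` of elements of `X`). If adjacent bags agree
on marginals over their intersections, then there is a distribution supported on `X`
whose marginal on each bag `i` is `D i`. -/
theorem stmt2 {n : ℕ} {κ ι : Type} [Fintype κ] [Fintype ι]
    (scope : κ → Finset (Fin n)) (C : κ → (Fin n → Bool) → Prop)
    (hlocal : ∀ j x y, (∀ v ∈ scope j, x v = y v) → (C j x ↔ C j y))
    (X : Set (Fin n → Bool)) (hX : X = {x | ∀ j, C j x})
    (T : SimpleGraph ι) (bag : ι → Finset (Fin n))
    (htree : T.IsTree)
    (hedges : ∀ j, ∃ i, scope j ⊆ bag i)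
    (hconn : ∀ v : Fin n, (∃ i, v ∈ bag i) ∧ (T.induce {i | v ∈ bag i}).Connected)
    (D : (i : ι) → PMF ({v : Fin n // v ∈ bag i} → Bool))
    (hsupp : ∀ i, ∀ f ∈ (D i).support,
      ∃ x ∈ X, f = fun v : {v : Fin n // v ∈ bag i} => x v.1)
    (hagree : ∀ i j, T.Adj i j →
      (D i).map (fun f (v : {v : Fin n // v ∈ bag i ∩ bag j}) =>
          f ⟨v.1, (Finset.mem_inter.mp v.2).1⟩) =
      (D j).map (fun f (v : {v : Fin n // v ∈ bag i ∩ bag j}) =>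
          f ⟨v.1, (Finset.mem_inter.mp v.2).2⟩)) :
    ∃ D' : PMF (Fin n → Bool),
      D'.support ⊆ X ∧
      ∀ i : ι, D'.map (fun x (v : {v : Fin n // v ∈ bag i}) => x v.1) = D i := by
  classical
  have hconnW : ∀ (v : Fin n) (i j : ι), v ∈ bag i → v ∈ bag j →
      ∃ W : T.Walk i j, ∀ k ∈ W.support, v ∈ bag k := by
    intro v i j hvi hvj
    obtain ⟨W⟩ := (hconn v).2.preconnected ⟨i, hvi⟩ ⟨j, hvj⟩
    exact Stmt2Aux.walk_of_induce W
  obtain ⟨D', hD'⟩ := Stmt2Aux.glue (Fintype.card ι) T bag htree hconnW D hagree le_rfl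
  refine ⟨D', ?_, hD'⟩
  intro x hx
  rw [hX]
  intro j
  obtain ⟨i, hscope⟩ := hedges j
  have hmem : (fun v : {v : Fin n // v ∈ bag i} => x v.1) ∈ (D i).support := by
    rw [← hD' i, PMF.support_map]
    exact Set.mem_image_of_mem _ hx
  obtain ⟨y, hyX, hfy⟩ := hsupp i _ hmem
  have hxy : ∀ v ∈ scope j, x v = y v := by
    intro v hv
    exact congrFun hfy ⟨v, hscope hv⟩
  rw [hlocal j x y hxy]
  exact (hX ▸ hyX) j
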